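/- Let I₀ be an HR instance, let h be a hospital of I₀ with positive capacity, and let I₁ be the HR instance identical to I₀ except that the capacity of h is decreased by 1. Let M₀ be any stable matching of I₀ and M₁ be any stable matching of I₁. Then (i) |M₁(h)| ≥ |M₀(h)| − 1, and (ii) |M₁(h')| ≥ |M₀(h')| for every hospital h' ≠ h. -/

import Mathlib

/-- `a` is strictly preferred to `b` in the strictly ordered preference list `l`
(most preferred first). -/
def ListPref {α : Type*} [DecidableEq α] (l : List α) (a b : α) : Prop :=
  b ∈ l ∧ l.idxOf a < l.idxOf b

/-- An instance of the Hospitals/Residents problem (HR): residents `R`,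
hospitals `H`, strict preference lists on both sides, hospital capacities `q`. -/
structure HR (R H : Type*) where
  prefR : R → List H
  prefH : H → List R
  q : H → ℕ

namespace HR

variable {R H : Type*} [DecidableEq R] [DecidableEq H]

/-- Well-formedness: preference lists are strict (no repetitions) and
acceptability is mutual. -/
def WellFormed (I : HR R H) : Prop :=
  (∀ r, (I.prefR r).Nodup) ∧ (∀ h, (I.prefH h).Nodup) ∧
  (∀ r h, h ∈ I.prefR r ↔ r ∈ I.prefH h)

/-- `M(h)`: the set of residents assigned to hospital `h`. -/
def assignedTo (M : Finset (R × H)) (h : H) : Finset R :=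
  (M.filter fun p => p.2 = h).image Prod.fst

/-- `M` is a matching: pairs are mutually acceptable, each resident has at most one
hospital, and no hospital exceeds its capacity. -/
def IsMatching (I : HR R H) (M : Finset (R × H)) : Prop :=
  (∀ p ∈ M, p.2 ∈ I.prefR p.1 ∧ p.1 ∈ I.prefH p.2) ∧
  (∀ r h h', (r, h) ∈ M → (r, h') ∈ M → h = h') ∧
  (∀ h, (assignedTo M h).card ≤ I.q h)

/-- `(r, h)` is a blocking pair for `M`. -/
def IsBlockingPair (I : HR R H) (M : Finset (R × H)) (r : R) (h : H) : Prop :=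
  (r, h) ∉ M ∧ (h ∈ I.prefR r ∧ r ∈ I.prefH h) ∧
  ((∀ h', (r, h') ∉ M) ∨ ∃ h', (r, h') ∈ M ∧ ListPref (I.prefR r) h h') ∧
  ((assignedTo M h).card < I.q h ∨ ∃ r' ∈ assignedTo M h, ListPref (I.prefH h) r r')

/-- `M` is a stable matching of `I`. -/
def IsStable (I : HR R H) (M : Finset (R × H)) : Prop :=
  I.IsMatching M ∧ ∀ r h, ¬ I.IsBlockingPair M r h

end HR

private lemma listPref_irrefl {α : Type*} [DecidableEq α] (l : List α) (a : α) :
    ¬ ListPref l a a := fun h => lt_irrefl _ h.2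

private lemma listPref_asymm {α : Type*} [DecidableEq α] {l : List α} {a b : α}
    (h1 : ListPref l a b) (h2 : ListPref l b a) : False :=
  lt_irrefl _ (h1.2.trans h2.2)

private lemma listPref_total {α : Type*} [DecidableEq α] {l : List α} {a b : α}
    (ha : a ∈ l) (hb : b ∈ l) (hne : a ≠ b) : ListPref l a b ∨ ListPref l b a := by
  rcases lt_trichotomy (l.idxOf a) (l.idxOf b) with h|h|h
  · exact Or.inl ⟨hb, h⟩
  · exact absurd ((List.idxOf_inj ha (y := b)).mp h) hne
  · exact Or.inr ⟨ha, h⟩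

private lemma mem_assignedTo {R H : Type*} [DecidableEq R] [DecidableEq H]
    (M : Finset (R × H)) (r : R) (h : H) :
    r ∈ HR.assignedTo M h ↔ (r, h) ∈ M := by
  constructor
  · intro hr
    simp only [HR.assignedTo, Finset.mem_image, Finset.mem_filter] at hr
    obtain ⟨⟨a, b⟩, ⟨hm, hb⟩, ha⟩ := hr
    simp only at hb ha
    subst hb; subst ha; exact hm
  · intro hm
    simp only [HR.assignedTo, Finset.mem_image, Finset.mem_filter]
    exact ⟨(r, h), ⟨hm, rfl⟩, rfl⟩

private lemma card_sdiff_le_iff {R : Type*} [DecidableEq R] (s t : Finset R) :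
    (s \ t).card ≤ (t \ s).card ↔ s.card ≤ t.card := by
  have e0 := Finset.card_sdiff_add_card_inter s t
  have e1 := Finset.card_sdiff_add_card_inter t s
  rw [Finset.inter_comm t s] at e1
  omega

/-- Let `I₀` be an HR instance, `h₀` a hospital with positive capacity, and `I₁`
the instance identical to `I₀` except that the capacity of `h₀` is decreased by 1.
For any stable matchings `M₀` of `I₀` and `M₁` of `I₁`:
(i) `|M₁(h₀)| ≥ |M₀(h₀)| − 1`, and (ii) `|M₁(h')| ≥ |M₀(h')|` for all `h' ≠ h₀`. -/
theorem stable_matching_capacity_decrease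
    {R H : Type*} [DecidableEq R] [DecidableEq H] [Fintype R] [Fintype H]
    (I₀ I₁ : HR R H) (hwf : I₀.WellFormed)
    (h₀ : H) (hpos : 0 < I₀.q h₀)
    (hpR : I₁.prefR = I₀.prefR) (hpH : I₁.prefH = I₀.prefH)
    (hq : I₁.q = Function.update I₀.q h₀ (I₀.q h₀ - 1))
    (M₀ M₁ : Finset (R × H)) (hM₀ : I₀.IsStable M₀) (hM₁ : I₁.IsStable M₁) :
    (HR.assignedTo M₀ h₀).card ≤ (HR.assignedTo M₁ h₀).card + 1 ∧
    ∀ h', h' ≠ h₀ → (HR.assignedTo M₀ h').card ≤ (HR.assignedTo M₁ h').card := by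
  classical
  obtain ⟨⟨acc₀, uniq₀, cap₀⟩, stab₀⟩ := hM₀
  obtain ⟨⟨acc₁, uniq₁, cap₁⟩, stab₁⟩ := hM₁
  simp only [hpR, hpH] at acc₁
  -- capacity facts
  have hq1 : ∀ h, h ≠ h₀ → I₁.q h = I₀.q h := by
    intro h hh; rw [hq, Function.update_of_ne hh]
  have hq0 : I₁.q h₀ = I₀.q h₀ - 1 := by rw [hq, Function.update_self]
  have hqle : ∀ h, I₁.q h ≤ I₀.q h := by
    intro h
    by_cases hh : h = h₀
    · subst hh; rw [hq0]; omega
    · rw [hq1 h hh]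
  -- the sets X (residents strictly better in M₁) and Y (strictly better in M₀)
  set X : Finset R := Finset.univ.filter (fun r => ∃ h, (r, h) ∈ M₁ ∧
      ((∀ h', (r, h') ∉ M₀) ∨ ∃ h', (r, h') ∈ M₀ ∧ ListPref (I₀.prefR r) h h')) with hXdef
  set Y : Finset R := Finset.univ.filter (fun r => ∃ h, (r, h) ∈ M₀ ∧
      ((∀ h', (r, h') ∉ M₁) ∨ ∃ h', (r, h') ∈ M₁ ∧ ListPref (I₀.prefR r) h h')) with hYdef
  have hX_mem : ∀ r, r ∈ X ↔ ∃ h, (r, h) ∈ M₁ ∧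
      ((∀ h', (r, h') ∉ M₀) ∨ ∃ h', (r, h') ∈ M₀ ∧ ListPref (I₀.prefR r) h h') := by
    intro r; rw [hXdef]; simp only [Finset.mem_filter, Finset.mem_univ, true_and]
  have hY_mem : ∀ r, r ∈ Y ↔ ∃ h, (r, h) ∈ M₀ ∧
      ((∀ h', (r, h') ∉ M₁) ∨ ∃ h', (r, h') ∈ M₁ ∧ ListPref (I₀.prefR r) h h') := by
    intro r; rw [hYdef]; simp only [Finset.mem_filter, Finset.mem_univ, true_and]
  -- key facts about X residents
  have hX_facts : ∀ r h, r ∈ X → (r, h) ∈ M₁ →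
      (r, h) ∉ M₀ ∧ (HR.assignedTo M₀ h).card = I₀.q h ∧
      ∀ r' ∈ HR.assignedTo M₀ h, ListPref (I₀.prefH h) r' r := by
    intro r h hrX hrh
    obtain ⟨h₁, hrh₁, hcond⟩ := (hX_mem r).mp hrX
    have hh1 : h₁ = h := uniq₁ r h₁ h hrh₁ hrh
    subst hh1
    have hnotM₀ : (r, h₁) ∉ M₀ := by
      intro hmem
      rcases hcond with hun | ⟨h', hh', hpref⟩
      · exact hun h₁ hmem
      · have he : h' = h₁ := uniq₀ r h' h₁ hh' hmem
        subst he
        exact listPref_irrefl _ _ hpref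
    have hacc := acc₁ (r, h₁) hrh₁
    have hD : ¬ ((HR.assignedTo M₀ h₁).card < I₀.q h₁ ∨
        ∃ r' ∈ HR.assignedTo M₀ h₁, ListPref (I₀.prefH h₁) r r') := by
      intro hD
      exact stab₀ r h₁ ⟨hnotM₀, ⟨hacc.1, hacc.2⟩, hcond, hD⟩
    push_neg at hD
    obtain ⟨hqle', hpref'⟩ := hD
    refine ⟨hnotM₀, le_antisymm (cap₀ h₁) hqle', ?_⟩
    intro r' hr'
    have hr'M : (r', h₁) ∈ M₀ := (mem_assignedTo _ _ _).mp hr'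
    have hr'ne : r' ≠ r := fun he => hnotM₀ (he ▸ hr'M)
    have hr'p : r' ∈ I₀.prefH h₁ := (acc₀ (r', h₁) hr'M).2
    rcases listPref_total hr'p hacc.2 hr'ne with hp | hp
    · exact hp
    · exact absurd hp (hpref' r' hr')
  -- key facts about Y residents
  have hY_facts : ∀ r h, r ∈ Y → (r, h) ∈ M₀ →
      (r, h) ∉ M₁ ∧ I₁.q h ≤ (HR.assignedTo M₁ h).card ∧
      ∀ r' ∈ HR.assignedTo M₁ h, ListPref (I₀.prefH h) r' r := by
    intro r h hrY hrh
    obtain ⟨h₁, hrh₁, hcond⟩ := (hY_mem r).mp hrY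
    have hh1 : h₁ = h := uniq₀ r h₁ h hrh₁ hrh
    subst hh1
    have hnotM₁ : (r, h₁) ∉ M₁ := by
      intro hmem
      rcases hcond with hun | ⟨h', hh', hpref⟩
      · exact hun h₁ hmem
      · have he : h' = h₁ := uniq₁ r h' h₁ hh' hmem
        subst he
        exact listPref_irrefl _ _ hpref
    have hacc := acc₀ (r, h₁) hrh₁
    have hD : ¬ ((HR.assignedTo M₁ h₁).card < I₁.q h₁ ∨
        ∃ r' ∈ HR.assignedTo M₁ h₁, ListPref (I₁.prefH h₁) r r') := by
      intro hD
      refine stab₁ r h₁ ⟨hnotM₁, ?_, ?_, hD⟩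
      · rw [hpR, hpH]; exact ⟨hacc.1, hacc.2⟩
      · rw [hpR]; exact hcond
    push_neg at hD
    obtain ⟨hqle', hpref'⟩ := hD
    rw [hpH] at hpref'
    refine ⟨hnotM₁, hqle', ?_⟩
    intro r' hr'
    have hr'M : (r', h₁) ∈ M₁ := (mem_assignedTo _ _ _).mp hr'
    have hr'ne : r' ≠ r := fun he => hnotM₁ (he ▸ hr'M)
    have hr'p : r' ∈ I₀.prefH h₁ := (acc₁ (r', h₁) hr'M).2
    rcases listPref_total hr'p hacc.2 hr'ne with hp | hp
    · exact hp
    · exact absurd hp (hpref' r' hr')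
  -- trichotomy
  have tri : ∀ r h, (r, h) ∈ M₀ → (r, h) ∉ M₁ → r ∈ X ∨ r ∈ Y := by
    intro r h hm0 hm1
    by_cases hmatched : ∃ h', (r, h') ∈ M₁
    · obtain ⟨h', hm'⟩ := hmatched
      have hne : h ≠ h' := fun he => hm1 (he ▸ hm')
      have hp : h ∈ I₀.prefR r := (acc₀ (r, h) hm0).1
      have hp' : h' ∈ I₀.prefR r := (acc₁ (r, h') hm').1
      rcases listPref_total hp' hp hne.symm with hpp | hpp
      · exact Or.inl ((hX_mem r).mpr ⟨h', hm', Or.inr ⟨h, hm0, hpp⟩⟩)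
      · exact Or.inr ((hY_mem r).mpr ⟨h, hm0, Or.inr ⟨h', hm', hpp⟩⟩)
    · exact Or.inr ((hY_mem r).mpr ⟨h, hm0, Or.inl (fun h' hh' => hmatched ⟨h', hh'⟩)⟩)
  -- the set A of hospitals receiving an X resident in M₁
  set A : Finset H := Finset.univ.filter (fun h => ∃ r ∈ X, (r, h) ∈ M₁) with hAdef
  have hA_mem : ∀ h, h ∈ A ↔ ∃ r ∈ X, (r, h) ∈ M₁ := by
    intro h; rw [hAdef]; simp only [Finset.mem_filter, Finset.mem_univ, true_and]
  -- hospitals in A receive no Y resident in M₀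
  have noY : ∀ h, h ∈ A → ∀ r', (r', h) ∈ M₀ → r' ∉ Y := by
    intro h hA r' hm hrY
    obtain ⟨r, hrX, hrM⟩ := (hA_mem h).mp hA
    have h1 := (hX_facts r h hrX hrM).2.2 r' ((mem_assignedTo _ _ _).mpr hm)
    have h2 := (hY_facts r' h hrY hm).2.2 r ((mem_assignedTo _ _ _).mpr hrM)
    exact listPref_asymm h1 h2
  -- D₀ subsets of X for A hospitals
  have hD₀X : ∀ h ∈ A, HR.assignedTo M₀ h \ HR.assignedTo M₁ h ⊆ X := by
    intro h hA r hr
    rw [Finset.mem_sdiff] at hr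
    have hm0 := (mem_assignedTo _ _ _).mp hr.1
    have hm1 : (r, h) ∉ M₁ := fun hm => hr.2 ((mem_assignedTo _ _ _).mpr hm)
    rcases tri r h hm0 hm1 with hX | hY
    · exact hX
    · exact absurd hY (noY h hA r hm0)
  -- disjointness
  have disj₁ : ∀ x ∈ A, ∀ y ∈ A, x ≠ y →
      Disjoint (HR.assignedTo M₁ x \ HR.assignedTo M₀ x)
        (HR.assignedTo M₁ y \ HR.assignedTo M₀ y) := by
    intro x _ y _ hxy
    rw [Finset.disjoint_left]
    intro r hrx hry
    rw [Finset.mem_sdiff, mem_assignedTo] at hrx hry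
    exact hxy (uniq₁ r x y hrx.1 hry.1)
  have disj₀ : ∀ x ∈ A, ∀ y ∈ A, x ≠ y →
      Disjoint (HR.assignedTo M₀ x \ HR.assignedTo M₁ x)
        (HR.assignedTo M₀ y \ HR.assignedTo M₁ y) := by
    intro x _ y _ hxy
    rw [Finset.disjoint_left]
    intro r hrx hry
    rw [Finset.mem_sdiff, mem_assignedTo] at hrx hry
    exact hxy (uniq₀ r x y hrx.1 hry.1)
  -- X is covered by the D₁ sets over A
  have hXsub : X ⊆ A.biUnion (fun h => HR.assignedTo M₁ h \ HR.assignedTo M₀ h) := by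
    intro r hrX
    obtain ⟨h, hm, _⟩ := (hX_mem r).mp hrX
    have hnot := (hX_facts r h hrX hm).1
    rw [Finset.mem_biUnion]
    refine ⟨h, (hA_mem h).mpr ⟨r, hrX, hm⟩, ?_⟩
    rw [Finset.mem_sdiff, mem_assignedTo, mem_assignedTo]
    exact ⟨hm, hnot⟩
  have hD₀sub : A.biUnion (fun h => HR.assignedTo M₀ h \ HR.assignedTo M₁ h) ⊆ X :=
    Finset.biUnion_subset.mpr hD₀X
  have sum1 : (A.biUnion (fun h => HR.assignedTo M₁ h \ HR.assignedTo M₀ h)).card =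
      ∑ h ∈ A, (HR.assignedTo M₁ h \ HR.assignedTo M₀ h).card := Finset.card_biUnion disj₁
  have sum0 : (A.biUnion (fun h => HR.assignedTo M₀ h \ HR.assignedTo M₁ h)).card =
      ∑ h ∈ A, (HR.assignedTo M₀ h \ HR.assignedTo M₁ h).card := Finset.card_biUnion disj₀
  have hXcard_le : X.card ≤ ∑ h ∈ A, (HR.assignedTo M₁ h \ HR.assignedTo M₀ h).card :=
    sum1 ▸ Finset.card_le_card hXsub
  have hsum0_le : ∑ h ∈ A, (HR.assignedTo M₀ h \ HR.assignedTo M₁ h).card ≤ X.card :=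
    sum0 ▸ Finset.card_le_card hD₀sub
  -- termwise inequality over A
  have hterm : ∀ h ∈ A, (HR.assignedTo M₁ h \ HR.assignedTo M₀ h).card ≤
      (HR.assignedTo M₀ h \ HR.assignedTo M₁ h).card := by
    intro h hA
    obtain ⟨r, hrX, hm⟩ := (hA_mem h).mp hA
    have hfull := (hX_facts r h hrX hm).2.1
    have hle : (HR.assignedTo M₁ h).card ≤ (HR.assignedTo M₀ h).card := by
      calc (HR.assignedTo M₁ h).card ≤ I₁.q h := cap₁ h
        _ ≤ I₀.q h := hqle h
        _ = (HR.assignedTo M₀ h).card := hfull.symm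
    exact (card_sdiff_le_iff _ _).mpr hle
  have hsum_le : ∑ h ∈ A, (HR.assignedTo M₁ h \ HR.assignedTo M₀ h).card ≤
      ∑ h ∈ A, (HR.assignedTo M₀ h \ HR.assignedTo M₁ h).card := Finset.sum_le_sum hterm
  -- everything is equal
  have htermeq : ∀ h ∈ A, (HR.assignedTo M₀ h \ HR.assignedTo M₁ h).card ≤
      (HR.assignedTo M₁ h \ HR.assignedTo M₀ h).card := by
    intro h hA
    by_contra hlt
    push_neg at hlt
    have := Finset.sum_lt_sum hterm ⟨h, hA, hlt⟩
    omega
  have hEq : A.biUnion (fun h => HR.assignedTo M₀ h \ HR.assignedTo M₁ h) = X := by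
    apply Finset.eq_of_subset_of_card_le hD₀sub
    omega
  -- the key inequality
  have key : ∀ h, (HR.assignedTo M₁ h).card < (HR.assignedTo M₀ h).card →
      h = h₀ ∧ (HR.assignedTo M₀ h).card ≤ (HR.assignedTo M₁ h).card + 1 := by
    intro h hlt
    have hD₀pos : 0 < (HR.assignedTo M₀ h \ HR.assignedTo M₁ h).card := by
      by_contra hz
      push_neg at hz
      have : (HR.assignedTo M₀ h \ HR.assignedTo M₁ h).card ≤
          (HR.assignedTo M₁ h \ HR.assignedTo M₀ h).card := by omega
      have := (card_sdiff_le_iff _ _).mp this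
      omega
    obtain ⟨r, hr⟩ := Finset.card_pos.mp hD₀pos
    rw [Finset.mem_sdiff] at hr
    have hm0 := (mem_assignedTo _ _ _).mp hr.1
    have hm1 : (r, h) ∉ M₁ := fun hm => hr.2 ((mem_assignedTo _ _ _).mpr hm)
    rcases tri r h hm0 hm1 with hX | hY
    · -- r ∈ X, so h ∈ A and then cards are equal: contradiction
      have : r ∈ A.biUnion (fun h => HR.assignedTo M₀ h \ HR.assignedTo M₁ h) := hEq ▸ hX
      rw [Finset.mem_biUnion] at this
      obtain ⟨h', hA', hr'⟩ := this
      rw [Finset.mem_sdiff, mem_assignedTo] at hr'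
      have : h' = h := uniq₀ r h' h hr'.1 hm0
      subst this
      have := (card_sdiff_le_iff (HR.assignedTo M₀ h') (HR.assignedTo M₁ h')).mp
        (htermeq h' hA')
      omega
    · -- r ∈ Y : h is full in M₁
      have hfull := (hY_facts r h hY hm0).2.1
      have hcap := cap₀ h
      by_cases hh : h = h₀
      · subst hh
        rw [hq0] at hfull
        exact ⟨rfl, by omega⟩
      · rw [hq1 h hh] at hfull
        omega
  constructor
  · by_cases hlt : (HR.assignedTo M₁ h₀).card < (HR.assignedTo M₀ h₀).card
    · exact (key h₀ hlt).2
    · omega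
  · intro h' hne
    by_contra hlt
    push_neg at hlt
    exact hne (key h' hlt).1
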